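/- Time-shifted synchronization of the augmented birth-death chain: let x, y ∈ ℕ have the same parity. Then for ℙ_Ω-a.e. ω = (q,r) ∈ Ω there exist n₀ ∈ ℕ and R ≥ 0 such that for all n ≥ n₀ one has Xⁿ(x) = Xⁿ(y) and |Tⁿ(x) − Tⁿ(y)| = R, where Xⁿ and Tⁿ denote the state and jump-time sequences of the augmented Markov chain started at state x (resp. y) at time 0. -/

import Mathlib

open MeasureTheory ProbabilityTheory Filter

/-- The birth-death transition map. -/
noncomputable def bdStep (γ₁ γ₂ : ℝ) (q : ℝ) (x : ℕ) : ℕ :=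
  if q < γ₁ / (γ₁ + γ₂ * x) then x + 1 else x - 1

/-- The state sequence of the embedded birth-death chain. -/
noncomputable def bdCocycle (γ₁ γ₂ : ℝ) (q : ℕ → ℝ) : ℕ → ℕ → ℕ
  | 0, x => x
  | n + 1, x => bdStep γ₁ γ₂ (q n) (bdCocycle γ₁ γ₂ q n x)

/-- The jump-time sequence of the augmented birth-death chain: `T⁰ = 0` and
`T^{n+1} = Tⁿ + (1/(γ₁+γ₂·Xⁿ))·log(1/rₙ)`, where the noise is `ωₙ = (qₙ, rₙ)`. -/
noncomputable def bdTime (γ₁ γ₂ : ℝ) (ω : ℕ → ℝ × ℝ) (x : ℕ) : ℕ → ℝ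
  | 0 => 0
  | n + 1 => bdTime γ₁ γ₂ ω x n +
      (1 / (γ₁ + γ₂ * (bdCocycle γ₁ γ₂ (fun k => (ω k).1) n x : ℝ))) *
        Real.log (1 / (ω n).2)

namespace BD

/-! ### Deterministic lemmas about the birth-death cocycle -/

variable {γ₁ γ₂ : ℝ}

lemma step_le (a : ℝ) (s : ℕ) : bdStep γ₁ γ₂ a s ≤ s + 1 := by
  unfold bdStep; split <;> omega

lemma thr_anti (hγ₁ : 0 < γ₁) (hγ₂ : 0 < γ₂) {s s' : ℕ} (h : s ≤ s') :
    γ₁ / (γ₁ + γ₂ * s') ≤ γ₁ / (γ₁ + γ₂ * s) := by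
  apply div_le_div_of_nonneg_left hγ₁.le (by positivity)
  have : (s : ℝ) ≤ s' := Nat.cast_le.2 h
  nlinarith

lemma step_zero {a : ℝ} (hγ₁ : 0 < γ₁) (ha : a < 1) : bdStep γ₁ γ₂ a 0 = 1 := by
  unfold bdStep
  rw [if_pos]
  simpa [div_self hγ₁.ne'] using ha

lemma step_down {a : ℝ} {s : ℕ} (h : γ₁ / (γ₁ + γ₂ * s) ≤ a) : bdStep γ₁ γ₂ a s = s - 1 :=
  if_neg (not_lt.2 h)

lemma cocycle_succ (q : ℕ → ℝ) (n x : ℕ) :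
    bdCocycle γ₁ γ₂ q (n + 1) x = bdStep γ₁ γ₂ (q n) (bdCocycle γ₁ γ₂ q n x) := rfl

lemma cocycle_persist (q : ℕ → ℝ) {n x y : ℕ}
    (h : bdCocycle γ₁ γ₂ q n x = bdCocycle γ₁ γ₂ q n y) (k : ℕ) :
    bdCocycle γ₁ γ₂ q (n + k) x = bdCocycle γ₁ γ₂ q (n + k) y := by
  induction k with
  | zero => simpa
  | succ k ih => rw [show n + (k+1) = (n+k)+1 by ring, cocycle_succ, cocycle_succ, ih]

lemma cocycle_parity (hγ₁ : 0 < γ₁) (q : ℕ → ℝ) (hq : ∀ i, q i < 1) (x : ℕ) :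
    ∀ n, bdCocycle γ₁ γ₂ q n x % 2 = (x + n) % 2 := by
  intro n
  induction n with
  | zero => simp [bdCocycle]
  | succ n ih =>
    rw [cocycle_succ]
    set s := bdCocycle γ₁ γ₂ q n x with hs
    by_cases h : q n < γ₁ / (γ₁ + γ₂ * s)
    · rw [bdStep, if_pos h]; omega
    · have hs1 : 1 ≤ s := by
        by_contra hc
        have : s = 0 := by omega
        rw [this] at h
        exact h (by simpa [div_self hγ₁.ne'] using hq n)
      rw [bdStep, if_neg h]; omega

lemma cocycle_local {q q' : ℕ → ℝ} {n : ℕ} (h : ∀ i < n, q i = q' i) (x : ℕ) :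
    bdCocycle γ₁ γ₂ q n x = bdCocycle γ₁ γ₂ q' n x := by
  induction n with
  | zero => rfl
  | succ n ih =>
    rw [cocycle_succ, cocycle_succ, ih (fun i hi => h i (by omega)), h n (by omega)]

lemma cocycle_funnel (hγ₁ : 0 < γ₁) (hγ₂ : 0 < γ₂) (q : ℕ → ℝ) (x : ℕ) :
    ∀ k n, (∀ i, n ≤ i → i < n + k → γ₁ / (γ₁ + γ₂) ≤ q i ∧ q i < 1) →
    bdCocycle γ₁ γ₂ q n x ≤ k →
    bdCocycle γ₁ γ₂ q (n + k) x = (k - bdCocycle γ₁ γ₂ q n x) % 2 := by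
  intro k
  induction k with
  | zero => intro n _ hle; interval_cases h : bdCocycle γ₁ γ₂ q n x <;> simp [h]
  | succ k ih =>
    intro n hq hle
    set s := bdCocycle γ₁ γ₂ q n x with hs
    have hqn := hq n (le_refl n) (by omega)
    have hstep : bdCocycle γ₁ γ₂ q (n + 1) x = if s = 0 then 1 else s - 1 := by
      rw [cocycle_succ, ← hs]
      by_cases h0 : s = 0
      · rw [h0, if_pos rfl, step_zero hγ₁ hqn.2]
      · rw [if_neg h0]
        refine step_down (le_trans ?_ hqn.1)
        have : (1:ℕ) ≤ s := by omega
        simpa using thr_anti hγ₁ hγ₂ this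
    have harith : n + (k + 1) = (n + 1) + k := by ring
    rcases Nat.eq_zero_or_pos k with hk | hk
    · subst hk
      simp only [hstep]
      by_cases h0 : s = 0 <;> simp [h0] <;> omega
    · have hq' : ∀ i, n + 1 ≤ i → i < (n + 1) + k → γ₁ / (γ₁ + γ₂) ≤ q i ∧ q i < 1 :=
        fun i h1 h2 => hq i (by omega) (by omega)
      by_cases h0 : s = 0
      · have := ih (n+1) hq' (by rw [hstep, if_pos h0]; omega)
        rw [harith, this, hstep, if_pos h0, h0]
        omega
      · have := ih (n+1) hq' (by rw [hstep, if_neg h0]; omega)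
        rw [harith, this, hstep, if_neg h0]
        omega

/-! ### The dominating reflected random walk -/

noncomputable def Ydom (M x0 : ℕ) (tM : ℝ) (q : ℕ → ℝ) : ℕ → ℕ
  | 0 => x0
  | n + 1 => if q n < tM then Ydom M x0 tM q n + 1 else max (Ydom M x0 tM q n - 1) M

noncomputable def Sw (tM : ℝ) (q : ℕ → ℝ) (n : ℕ) : ℝ :=
  ∑ i ∈ Finset.range n, (if q i < tM then (1:ℝ) else -1)

noncomputable def mrun (tM : ℝ) (q : ℕ → ℝ) : ℕ → ℝ
  | 0 => 0
  | n + 1 => min (mrun tM q n) (Sw tM q (n+1))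

variable {M x0 : ℕ} {tM : ℝ} {q : ℕ → ℝ}

lemma Ydom_ge (h : M ≤ x0) : ∀ n, M ≤ Ydom M x0 tM q n := by
  intro n
  induction n with
  | zero => exact h
  | succ n ih => rw [Ydom]; split <;> omega

lemma Ydom_growth (h : M ≤ x0) (n k : ℕ) :
    Ydom M x0 tM q (n + k) ≤ Ydom M x0 tM q n + k := by
  induction k with
  | zero => simp
  | succ k ih =>
    have h2 := Ydom_ge (q := q) (tM := tM) h (n + k)
    rw [show n + (k+1) = (n+k)+1 by ring, Ydom]
    split <;> omega

lemma Ydom_local {q q' : ℕ → ℝ} {n : ℕ} (h : ∀ i < n, q i = q' i) :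
    Ydom M x0 tM q n = Ydom M x0 tM q' n := by
  induction n with
  | zero => rfl
  | succ n ih =>
    rw [Ydom, Ydom, ih (fun i hi => h i (by omega)), h n (by omega)]

lemma Ydom_dominates (hγ₁ : 0 < γ₁) (hγ₂ : 0 < γ₂)
    (htM : γ₁ / (γ₁ + γ₂ * M) ≤ tM) {x : ℕ} (hx : x ≤ x0) :
    ∀ n, bdCocycle γ₁ γ₂ q n x ≤ Ydom M x0 tM q n := by
  intro n
  induction n with
  | zero => exact hx
  | succ n ih =>
    rw [cocycle_succ, Ydom]
    set s := bdCocycle γ₁ γ₂ q n x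
    by_cases hq : q n < tM
    · rw [if_pos hq]
      have := step_le (γ₁ := γ₁) (γ₂ := γ₂) (q n) s
      omega
    · rw [if_neg hq]
      by_cases hsM : M ≤ s
      · have hdown : bdStep γ₁ γ₂ (q n) s = s - 1 :=
          step_down (le_trans (le_trans (thr_anti hγ₁ hγ₂ hsM) htM) (not_lt.1 hq))
        omega
      · have := step_le (γ₁ := γ₁) (γ₂ := γ₂) (q n) s
        omega

lemma mrun_le {n j : ℕ} (h : j ≤ n) : mrun tM q n ≤ Sw tM q j := by
  induction n with
  | zero =>
    have : j = 0 := by omega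
    simp [this, mrun, Sw]
  | succ n ih =>
    rcases Nat.lt_or_ge j (n+1) with h' | h'
    · exact le_trans (min_le_left _ _) (ih (by omega))
    · have : j = n + 1 := by omega
      rw [this, mrun]
      exact min_le_right _ _

lemma mrun_mem : ∀ n, ∃ j ≤ n, mrun tM q n = Sw tM q j := by
  intro n
  induction n with
  | zero => exact ⟨0, le_refl 0, by simp [mrun, Sw]⟩
  | succ n ih =>
    obtain ⟨j, hj, hje⟩ := ih
    rw [mrun]
    rcases le_total (mrun tM q n) (Sw tM q (n+1)) with h | h
    · exact ⟨j, by omega, by rw [min_eq_left h, hje]⟩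
    · exact ⟨n+1, le_refl _, min_eq_right h⟩

lemma Ydom_lindley (h : M ≤ x0) :
    ∀ n, (Ydom M x0 tM q n : ℝ) ≤ max (x0 + Sw tM q n) (M + Sw tM q n - mrun tM q n) := by
  intro n
  induction n with
  | zero => simp [Ydom, Sw, mrun]
  | succ n ih =>
    have hsucc : Sw tM q (n+1) = Sw tM q n + (if q n < tM then (1:ℝ) else -1) :=
      Finset.sum_range_succ _ n
    have hmle : mrun tM q (n+1) ≤ mrun tM q n := min_le_left _ _
    have hmS : mrun tM q (n+1) ≤ Sw tM q (n+1) := mrun_le (le_refl _)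
    rw [Ydom]
    by_cases hq : q n < tM
    · rw [if_pos hq]
      rw [if_pos hq] at hsucc
      push_cast
      rcases le_max_iff.1 ih with h1 | h1
      · apply le_max_of_le_left; linarith
      · apply le_max_of_le_right; linarith
    · rw [if_neg hq]
      rw [if_neg hq] at hsucc
      have hY := Ydom_ge (q := q) (tM := tM) h n
      have hcast : ((max (Ydom M x0 tM q n - 1) M : ℕ) : ℝ)
          ≤ max ((Ydom M x0 tM q n : ℝ) - 1) (M : ℝ) := by
        rcases Nat.eq_zero_or_pos (Ydom M x0 tM q n) with h0 | h0
        · have hM0 : M = 0 := by omega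
          rw [h0, hM0]
          norm_num
        · push_cast [Nat.cast_max, Nat.cast_sub h0]
          exact le_refl _
      refine le_trans hcast (max_le ?_ ?_)
      · rcases le_max_iff.1 ih with h1 | h1
        · apply le_max_of_le_left; linarith
        · apply le_max_of_le_right; linarith
      · apply le_max_of_le_right; linarith

lemma Ydom_small_io (h : M ≤ x0) (hS : Tendsto (Sw tM q) atTop atBot) :
    ∀ N, ∃ n ≥ N, Ydom M x0 tM q n ≤ M := by
  intro N
  classical
  set c : ℝ := min (mrun tM q N) ((M : ℝ) - x0) with hc
  have hev : ∀ᶠ n in atTop, Sw tM q n < c := hS.eventually (eventually_lt_atBot c)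
  have hex : ∃ n, Sw tM q n < c := by
    obtain ⟨n, hn⟩ := hev.exists; exact ⟨n, hn⟩
  set n₀ := Nat.find hex with hn₀
  have hspec : Sw tM q n₀ < c := Nat.find_spec hex
  have hmin : ∀ j < n₀, c ≤ Sw tM q j := fun j hj => not_lt.1 (Nat.find_min hex hj)
  have hN : N ≤ n₀ := by
    by_contra hcon
    have : c ≤ Sw tM q N := by
      calc c ≤ mrun tM q N := min_le_left _ _
        _ ≤ Sw tM q N := mrun_le (le_refl _)
    have h2 : c ≤ Sw tM q n₀ := le_trans (min_le_left _ _) (mrun_le (le_of_not_ge (by omega)))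
    linarith
  refine ⟨n₀, hN, ?_⟩
  have hmm : mrun tM q n₀ = Sw tM q n₀ := by
    obtain ⟨j, hj, hje⟩ := mrun_mem (tM := tM) (q := q) n₀
    rcases Nat.lt_or_ge j n₀ with h' | h'
    · have := hmin j h'
      have h2 : mrun tM q n₀ ≤ Sw tM q n₀ := mrun_le (le_refl _)
      linarith
    · have : j = n₀ := by omega
      subst this
      exact hje
  have hlin := Ydom_lindley (q := q) (tM := tM) h n₀
  rw [hmm] at hlin
  have hcM : c ≤ (M : ℝ) - x0 := min_le_right _ _
  have : (Ydom M x0 tM q n₀ : ℝ) ≤ (M : ℝ) := by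
    rcases le_max_iff.1 hlin with h1 | h1 <;> linarith
  exact_mod_cast this

/-- The key deterministic coalescence step. -/
lemma coalesce (hγ₁ : 0 < γ₁) (hγ₂ : 0 < γ₂) {q : ℕ → ℝ} (hq1 : ∀ i, q i < 1)
    {x y M x0 : ℕ} (hpar : x % 2 = y % 2) (hx : x ≤ x0) (hy : y ≤ x0) (hM : M ≤ x0) (j : ℕ)
    (hB : Ydom M x0 (γ₁ / (γ₁ + γ₂ * M)) q (j*M) ≤ 2*M)
    (hg : ∀ i, j*M ≤ i → i < j*M + 2*M → γ₁ / (γ₁ + γ₂) ≤ q i) :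
    bdCocycle γ₁ γ₂ q ((j+2)*M) x = bdCocycle γ₁ γ₂ q ((j+2)*M) y := by
  have hsx : bdCocycle γ₁ γ₂ q (j*M) x ≤ 2*M :=
    le_trans (Ydom_dominates hγ₁ hγ₂ le_rfl hx (j*M)) hB
  have hsy : bdCocycle γ₁ γ₂ q (j*M) y ≤ 2*M :=
    le_trans (Ydom_dominates hγ₁ hγ₂ le_rfl hy (j*M)) hB
  have hgood : ∀ i, j*M ≤ i → i < j*M + 2*M → γ₁ / (γ₁ + γ₂) ≤ q i ∧ q i < 1 :=
    fun i h1 h2 => ⟨hg i h1 h2, hq1 i⟩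
  have hfx := cocycle_funnel hγ₁ hγ₂ q x (2*M) (j*M) hgood hsx
  have hfy := cocycle_funnel hγ₁ hγ₂ q y (2*M) (j*M) hgood hsy
  have hpx := cocycle_parity (γ₂ := γ₂) hγ₁ q hq1 x (j*M)
  have hpy := cocycle_parity (γ₂ := γ₂) hγ₁ q hq1 y (j*M)
  have harith : (j+2)*M = j*M + 2*M := by ring
  rw [harith, hfx, hfy]
  omega

/-! ### Measurability -/

lemma meas_cocycle (γ₁ γ₂ : ℝ) (n x : ℕ) :
    Measurable (fun ω : ℕ → ℝ × ℝ => bdCocycle γ₁ γ₂ (fun k => (ω k).1) n x) := by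
  induction n with
  | zero => exact measurable_const
  | succ n ih =>
    have hpair : Measurable (fun ω : ℕ → ℝ × ℝ =>
        ((ω n).1, bdCocycle γ₁ γ₂ (fun k => (ω k).1) n x)) :=
      ((measurable_pi_apply n).fst).prodMk ih
    have hset : MeasurableSet {p : ℝ × ℕ | p.1 < γ₁ / (γ₁ + γ₂ * p.2)} :=
      measurableSet_lt measurable_fst
        ((measurable_from_nat (f := fun s : ℕ => γ₁ / (γ₁ + γ₂ * s))).comp measurable_snd)
    show Measurable fun ω : ℕ → ℝ × ℝ =>
      if (ω n).1 < γ₁ / (γ₁ + γ₂ * (bdCocycle γ₁ γ₂ (fun k => (ω k).1) n x : ℕ)) then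
        bdCocycle γ₁ γ₂ (fun k => (ω k).1) n x + 1
      else bdCocycle γ₁ γ₂ (fun k => (ω k).1) n x - 1
    exact Measurable.ite (hpair hset)
      ((measurable_from_nat (f := fun s : ℕ => s + 1)).comp ih)
      ((measurable_from_nat (f := fun s : ℕ => s - 1)).comp ih)

lemma meas_Ydom (M x0 : ℕ) (tM : ℝ) (n : ℕ) :
    Measurable (fun ω : ℕ → ℝ × ℝ => Ydom M x0 tM (fun k => (ω k).1) n) := by
  induction n with
  | zero => exact measurable_const
  | succ n ih =>
    show Measurable fun ω : ℕ → ℝ × ℝ =>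
      if (ω n).1 < tM then Ydom M x0 tM (fun k => (ω k).1) n + 1
      else max (Ydom M x0 tM (fun k => (ω k).1) n - 1) M
    exact Measurable.ite
      (measurableSet_lt ((measurable_pi_apply n).fst) measurable_const)
      ((measurable_from_nat (f := fun s : ℕ => s + 1)).comp ih)
      ((measurable_from_nat (f := fun s : ℕ => max (s - 1) M)).comp ih)

/-! ### Probabilistic lemmas -/

variable {P : Measure (ℕ → ℝ × ℝ)} [IsProbabilityMeasure P]

instance : IsProbabilityMeasure (volume.restrict (Set.Icc (0 : ℝ) 1)) := by
  constructor
  rw [Measure.restrict_apply_univ, Real.volume_Icc]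
  norm_num

omit [IsProbabilityMeasure P] in
lemma indep_of_local
    (hIndep : iIndepFun (fun n (ω : ℕ → ℝ × ℝ) => ω n) P)
    (S T : Finset ℕ) (hST : Disjoint S T) (A B : Set (ℕ → ℝ × ℝ))
    (hA : MeasurableSet A) (hB : MeasurableSet B)
    (hlocA : ∀ a b : ℕ → ℝ × ℝ, (∀ i ∈ S, a i = b i) → a ∈ A → b ∈ A)
    (hlocB : ∀ a b : ℕ → ℝ × ℝ, (∀ i ∈ T, a i = b i) → a ∈ B → b ∈ B) :
    P (A ∩ B) = P A * P B := by
  classical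
  have hmeas : ∀ i : ℕ, Measurable (fun ω : ℕ → ℝ × ℝ => ω i) := measurable_pi_apply
  have hind := hIndep.indepFun_finset S T hST hmeas
  set extS : (S → ℝ × ℝ) → (ℕ → ℝ × ℝ) :=
    fun v i => if h : i ∈ S then v ⟨i, h⟩ else (0, 0) with hextSdef
  set extT : (T → ℝ × ℝ) → (ℕ → ℝ × ℝ) :=
    fun v i => if h : i ∈ T then v ⟨i, h⟩ else (0, 0) with hextTdef
  have hextS : Measurable extS := by
    apply measurable_pi_lambda
    intro i
    by_cases h : i ∈ S
    · simpa only [hextSdef, dif_pos h] using measurable_pi_apply (⟨i, h⟩ : S)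
    · simpa only [hextSdef, dif_neg h] using measurable_const
  have hextT : Measurable extT := by
    apply measurable_pi_lambda
    intro i
    by_cases h : i ∈ T
    · simpa only [hextTdef, dif_pos h] using measurable_pi_apply (⟨i, h⟩ : T)
    · simpa only [hextTdef, dif_neg h] using measurable_const
  have hAeq : A = (fun a (i : S) => a i) ⁻¹' (extS ⁻¹' A) := by
    ext a
    simp only [Set.mem_preimage]
    constructor
    · exact fun ha => hlocA a _ (fun i hi => by simp [hextSdef, hi]) ha
    · exact fun ha => hlocA _ a (fun i hi => by simp [hextSdef, hi]) ha
  have hBeq : B = (fun a (i : T) => a i) ⁻¹' (extT ⁻¹' B) := by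
    ext a
    simp only [Set.mem_preimage]
    constructor
    · exact fun ha => hlocB a _ (fun i hi => by simp [hextTdef, hi]) ha
    · exact fun ha => hlocB _ a (fun i hi => by simp [hextTdef, hi]) ha
  rw [hAeq, hBeq]
  exact hind.measure_inter_preimage_eq_mul _ _ (hextS hA) (hextT hB)

omit [IsProbabilityMeasure P] in
lemma marginal_apply
    (hUnif : ∀ n : ℕ, P.map (fun ω => ω n) =
      (volume.restrict (Set.Icc (0 : ℝ) 1)).prod (volume.restrict (Set.Icc (0 : ℝ) 1)))
    (n : ℕ) {A : Set (ℝ × ℝ)} (hA : MeasurableSet A) :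
    P ((fun ω : ℕ → ℝ × ℝ => ω n) ⁻¹' A) =
      ((volume.restrict (Set.Icc (0 : ℝ) 1)).prod (volume.restrict (Set.Icc (0 : ℝ) 1))) A := by
  rw [← hUnif n, Measure.map_apply (measurable_pi_apply n) hA]

omit [IsProbabilityMeasure P] in
lemma prod_fst_apply {s : Set ℝ} (hs : MeasurableSet s) :
    ((volume.restrict (Set.Icc (0 : ℝ) 1)).prod (volume.restrict (Set.Icc (0 : ℝ) 1)))
      (Prod.fst ⁻¹' s) = volume (s ∩ Set.Icc (0 : ℝ) 1) := by
  have : (Prod.fst ⁻¹' s : Set (ℝ × ℝ)) = s ×ˢ Set.univ := by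
    ext ⟨a, b⟩; simp
  rw [this, Measure.prod_prod, Measure.restrict_apply hs, Measure.restrict_apply_univ,
    Real.volume_Icc]
  simp

lemma slln_atBot
    (hIndep : iIndepFun (fun n (ω : ℕ → ℝ × ℝ) => ω n) P)
    (hUnif : ∀ n : ℕ, P.map (fun ω => ω n) =
      (volume.restrict (Set.Icc (0 : ℝ) 1)).prod (volume.restrict (Set.Icc (0 : ℝ) 1)))
    {tM : ℝ} (h0 : 0 ≤ tM) (h1 : tM ≤ 1) (h2 : tM < 1/2) :
    ∀ᵐ ω ∂P, Tendsto (Sw tM (fun k => (ω k).1)) atTop atBot := by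
  set g : ℝ × ℝ → ℝ := fun v => if v.1 < tM then 1 else -1 with hgdef
  have hg : Measurable g :=
    Measurable.ite (measurableSet_lt measurable_fst measurable_const)
      measurable_const measurable_const
  set ξ : ℕ → (ℕ → ℝ × ℝ) → ℝ := fun i ω => g (ω i) with hξdef
  have hξmeas : ∀ i, Measurable (ξ i) := fun i => hg.comp (measurable_pi_apply i)
  have hξindep : iIndepFun ξ P :=
    hIndep.comp (fun _ => g) (fun _ => hg)
  have hpair : Pairwise (Function.onFun (IndepFun · · P) ξ) := fun i j hij => hξindep.indepFun hij
  have hmap : ∀ i, P.map (ξ i) =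
      (((volume.restrict (Set.Icc (0 : ℝ) 1)).prod
        (volume.restrict (Set.Icc (0 : ℝ) 1)))).map g := by
    intro i
    rw [← hUnif i]
    exact (Measure.map_map hg (measurable_pi_apply i)).symm
  have hident : ∀ i, IdentDistrib (ξ i) (ξ 0) P P := fun i =>
    ⟨(hξmeas i).aemeasurable, (hξmeas 0).aemeasurable, by rw [hmap i, hmap 0]⟩
  have hint : Integrable (ξ 0) P := by
    refine (integrable_const (1:ℝ)).mono' (hξmeas 0).aestronglyMeasurable (ae_of_all _ ?_)
    intro ω
    simp only [hξdef, hgdef, Real.norm_eq_abs]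
    split <;> norm_num
  set μp := ((volume.restrict (Set.Icc (0 : ℝ) 1)).prod (volume.restrict (Set.Icc (0 : ℝ) 1)))
    with hμp
  have hA : MeasurableSet (Prod.fst ⁻¹' Set.Iio tM : Set (ℝ × ℝ)) :=
    measurable_fst measurableSet_Iio
  have hμA : μp (Prod.fst ⁻¹' Set.Iio tM) = ENNReal.ofReal tM := by
    rw [hμp, prod_fst_apply measurableSet_Iio]
    have : Set.Iio tM ∩ Set.Icc (0:ℝ) 1 = Set.Ico 0 tM := by
      ext z
      simp only [Set.mem_inter_iff, Set.mem_Iio, Set.mem_Icc, Set.mem_Ico]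
      constructor
      · rintro ⟨hz, hz0, _⟩; exact ⟨hz0, hz⟩
      · rintro ⟨hz0, hz⟩; exact ⟨hz, hz0, le_trans hz.le h1⟩
    rw [this, Real.volume_Ico]
    simp
  have hgind : ∀ v : ℝ × ℝ, g v =
      2 * Set.indicator (Prod.fst ⁻¹' Set.Iio tM) (fun _ => (1:ℝ)) v - 1 := by
    intro v
    by_cases h : v.1 < tM
    · rw [Set.indicator_of_mem (by simpa using h)]; simp [hgdef, h]; norm_num
    · rw [Set.indicator_of_notMem (by simpa using h)]; simp [hgdef, h]
  have hmean : ∫ ω, ξ 0 ω ∂P = 2 * tM - 1 := by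
    have h1' : ∫ ω, ξ 0 ω ∂P = ∫ v, g v ∂μp := by
      rw [← hUnif 0]
      exact (integral_map (φ := fun ω : ℕ → ℝ × ℝ => ω 0) (measurable_pi_apply 0).aemeasurable
        hg.aestronglyMeasurable).symm
    rw [h1']
    have hind_int : Integrable
        (Set.indicator (Prod.fst ⁻¹' Set.Iio tM) (fun _ => (1:ℝ))) μp :=
      (integrable_const (1:ℝ)).indicator hA
    calc ∫ v, g v ∂μp
        = ∫ v, (2 * Set.indicator (Prod.fst ⁻¹' Set.Iio tM) (fun _ => (1:ℝ)) v - 1) ∂μp := by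
          exact integral_congr_ae (ae_of_all _ hgind)
      _ = 2 * tM - 1 := by
          rw [integral_sub (hind_int.const_mul 2) (integrable_const 1),
            integral_const_mul, integral_indicator_const (1:ℝ) hA, integral_const, measureReal_def, measureReal_def, hμA,
            measure_univ]
          simp [ENNReal.toReal_ofReal h0]
  have hslln := strong_law_ae ξ hint hpair hident
  rw [hmean] at hslln
  filter_upwards [hslln] with ω hω
  have hSw : ∀ n, Sw tM (fun k => (ω k).1) n = ∑ i ∈ Finset.range n, ξ i ω := by
    intro n; rfl
  set e := 2 * tM - 1 with he
  have hneg : e < 0 := by rw [he]; linarith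
  have hev : ∀ᶠ n : ℕ in atTop, (n:ℝ)⁻¹ • (∑ i ∈ Finset.range n, ξ i ω) < e/2 :=
    hω.eventually_lt_const (by linarith)
  apply tendsto_atBot_mono' _ _ ((tendsto_const_mul_atBot_of_neg (by linarith : e/2 < 0)).2
    tendsto_natCast_atTop_atTop)
  filter_upwards [hev, eventually_ge_atTop 1] with n hn hn1
  have hnpos : (0:ℝ) < n := by exact_mod_cast hn1
  rw [hSw]
  have := mul_le_mul_of_nonneg_left hn.le hnpos.le
  rw [smul_eq_mul, ← mul_assoc, mul_inv_cancel₀ hnpos.ne', one_mul] at this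
  linarith [this]

end BD

/-- Time-shifted synchronization of the augmented birth-death chain: if the initial states
`x` and `y` have the same parity, then for almost every noise realization
`ω = (q,r) ∈ ([0,1]²)^ℕ` (iid uniform coordinates) there exist `n₀ ∈ ℕ` and `R ≥ 0` such
that for all `n ≥ n₀` the states coincide, `Xⁿ(x) = Xⁿ(y)`, and the jump times differ by the
constant shift `R`, `|Tⁿ(x) − Tⁿ(y)| = R`. -/
theorem stmt8 (γ₁ γ₂ : ℝ) (hγ₁ : 0 < γ₁) (hγ₂ : 0 < γ₂)
    (P : Measure (ℕ → ℝ × ℝ)) [IsProbabilityMeasure P]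
    (hIndep : iIndepFun (fun n (ω : ℕ → ℝ × ℝ) => ω n) P)
    (hUnif : ∀ n : ℕ, P.map (fun ω => ω n) =
      (volume.restrict (Set.Icc (0 : ℝ) 1)).prod (volume.restrict (Set.Icc (0 : ℝ) 1)))
    (x y : ℕ) (hpar : x % 2 = y % 2) :
    ∀ᵐ ω ∂P, ∃ n₀ : ℕ, ∃ R : ℝ, 0 ≤ R ∧ ∀ n ≥ n₀,
      bdCocycle γ₁ γ₂ (fun k => (ω k).1) n x = bdCocycle γ₁ γ₂ (fun k => (ω k).1) n y ∧
      |bdTime γ₁ γ₂ ω x n - bdTime γ₁ γ₂ ω y n| = R := by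
  classical
  -- Parameters
  set M : ℕ := ⌈γ₁ / γ₂⌉₊ + 1 with hMdef
  set tM : ℝ := γ₁ / (γ₁ + γ₂ * M) with htMdef
  set t₁ : ℝ := γ₁ / (γ₁ + γ₂) with ht₁def
  set x0 : ℕ := max (max x y) M with hx0def
  have hMx0 : M ≤ x0 := le_max_right _ _
  have hxx0 : x ≤ x0 := le_trans (le_max_left _ _) (le_max_left _ _)
  have hyy0 : y ≤ x0 := le_trans (le_max_right x y) (le_max_left _ _)
  have hMpos : 1 ≤ M := by omega
  have hγM : γ₁ < γ₂ * M := by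
    have h1 : γ₁ / γ₂ ≤ (⌈γ₁ / γ₂⌉₊ : ℝ) := Nat.le_ceil _
    have h2 : ((⌈γ₁ / γ₂⌉₊ : ℝ)) < (M : ℝ) := by
      rw [hMdef]; push_cast; linarith
    have h3 : γ₁ / γ₂ < (M : ℝ) := lt_of_le_of_lt h1 h2
    have := (div_lt_iff₀ hγ₂).1 h3
    linarith
  have hMcast : (0:ℝ) ≤ (M:ℝ) := Nat.cast_nonneg _
  have htM0 : 0 < tM := by rw [htMdef]; positivity
  have htM1 : tM ≤ 1 := by
    rw [htMdef, div_le_one (by positivity)]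
    nlinarith
  have htMhalf : tM < 1/2 := by
    rw [htMdef, div_lt_iff₀ (by positivity)]
    linarith
  have ht₁0 : 0 < t₁ := by rw [ht₁def]; positivity
  have ht₁1 : t₁ < 1 := by rw [ht₁def, div_lt_one (by positivity)]; linarith
  -- Events
  set Nset : ℕ → Set (ℕ → ℝ × ℝ) := fun j =>
    {ω | bdCocycle γ₁ γ₂ (fun k => (ω k).1) (j*M) x ≠ bdCocycle γ₁ γ₂ (fun k => (ω k).1) (j*M) y}
    with hNset
  set Bset : ℕ → Set (ℕ → ℝ × ℝ) := fun j =>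
    {ω | BD.Ydom M x0 tM (fun k => (ω k).1) (j*M) ≤ 2*M} with hBset
  set gset : ℕ → Set (ℕ → ℝ × ℝ) := fun j =>
    ⋂ i ∈ Finset.Ico (j*M) (j*M + 2*M), (fun ω : ℕ → ℝ × ℝ => ω i) ⁻¹' {v : ℝ × ℝ | t₁ ≤ v.1}
    with hgset
  have hNmeas : ∀ j, MeasurableSet (Nset j) := by
    intro j
    have heq : Nset j = (fun ω : ℕ → ℝ × ℝ => (bdCocycle γ₁ γ₂ (fun k => (ω k).1) (j*M) x,
        bdCocycle γ₁ γ₂ (fun k => (ω k).1) (j*M) y)) ⁻¹' {p : ℕ × ℕ | p.1 ≠ p.2} := rfl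
    rw [heq]
    exact ((BD.meas_cocycle γ₁ γ₂ _ x).prodMk (BD.meas_cocycle γ₁ γ₂ _ y))
      (MeasurableSet.of_discrete)
  have hBmeas : ∀ j, MeasurableSet (Bset j) := fun j =>
    (BD.meas_Ydom M x0 tM (j*M)) (MeasurableSet.of_discrete (s := {s : ℕ | s ≤ 2*M}))
  have hsetv : MeasurableSet {v : ℝ × ℝ | t₁ ≤ v.1} :=
    measurableSet_le measurable_const measurable_fst
  have hgmeas : ∀ j, MeasurableSet (gset j) := fun j =>
    MeasurableSet.biInter (Finset.Ico (j*M) (j*M+2*M)).countable_toSet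
      (fun i _ => (measurable_pi_apply i) hsetv)
  -- measure of a good run
  set c : ENNReal := (ENNReal.ofReal (1 - t₁)) ^ (2*M) with hcdef
  have hc0 : c ≠ 0 := by
    rw [hcdef]
    apply pow_ne_zero
    simp only [ne_eq, ENNReal.ofReal_eq_zero, not_le]
    linarith
  have hcoordA : ∀ i : ℕ, P ((fun ω : ℕ → ℝ × ℝ => ω i) ⁻¹' {v : ℝ × ℝ | t₁ ≤ v.1})
      = ENNReal.ofReal (1 - t₁) := by
    intro i
    rw [BD.marginal_apply hUnif i hsetv,
      show ({v : ℝ × ℝ | t₁ ≤ v.1}) = Prod.fst ⁻¹' Set.Ici t₁ from rfl,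
      BD.prod_fst_apply measurableSet_Ici]
    have heq : Set.Ici t₁ ∩ Set.Icc (0:ℝ) 1 = Set.Icc t₁ 1 := by
      ext z
      simp only [Set.mem_inter_iff, Set.mem_Ici, Set.mem_Icc]
      constructor
      · rintro ⟨h1, _, h3⟩; exact ⟨h1, h3⟩
      · rintro ⟨h1, h2⟩; exact ⟨h1, le_trans ht₁0.le h1, h2⟩
    rw [heq, Real.volume_Icc]
  have hgP : ∀ j, P (gset j) = c := by
    intro j
    have hprod := hIndep.measure_inter_preimage_eq_mul
      (S := Finset.Ico (j*M) (j*M+2*M)) (sets := fun _ => {v : ℝ × ℝ | t₁ ≤ v.1})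
      (fun i _ => hsetv)
    rw [hgset]
    rw [hprod, Finset.prod_congr rfl (fun i _ => hcoordA i), Finset.prod_const, Nat.card_Ico,
      hcdef]
    congr 1
    omega
  -- the null event where some coordinate is ≥ 1
  have hW : ∀ᵐ ω ∂P, ∀ i : ℕ, (ω i).1 < 1 := by
    rw [ae_all_iff]
    intro i
    have hz : P ((fun ω : ℕ → ℝ × ℝ => ω i) ⁻¹' {v : ℝ × ℝ | 1 ≤ v.1}) = 0 := by
      rw [BD.marginal_apply hUnif i (measurableSet_le measurable_const measurable_fst),
        show ({v : ℝ × ℝ | 1 ≤ v.1}) = Prod.fst ⁻¹' Set.Ici 1 from rfl,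
        BD.prod_fst_apply measurableSet_Ici]
      have heq : Set.Ici (1:ℝ) ∩ Set.Icc 0 1 = {1} := by
        ext z
        simp only [Set.mem_inter_iff, Set.mem_Ici, Set.mem_Icc, Set.mem_singleton_iff]
        constructor
        · rintro ⟨h1, _, h3⟩; linarith
        · rintro rfl; norm_num
      rw [heq]
      exact Real.volume_singleton
    rw [ae_iff]
    have heq : {a : ℕ → ℝ × ℝ | ¬ (a i).1 < 1}
        = (fun ω : ℕ → ℝ × ℝ => ω i) ⁻¹' {v : ℝ × ℝ | 1 ≤ v.1} := by
      ext a; simp [not_lt]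
    rw [heq]
    exact hz
  -- independence of (N ∩ B) and the good run
  have hEg : ∀ j, P ((Nset j ∩ Bset j) ∩ gset j) = P (Nset j ∩ Bset j) * c := by
    intro j
    rw [← hgP j]
    apply BD.indep_of_local hIndep (Finset.range (j*M)) (Finset.Ico (j*M) (j*M+2*M))
      ?hdisj _ _ ((hNmeas j).inter (hBmeas j)) (hgmeas j)
    case hdisj =>
      rw [Finset.disjoint_left]
      intro a ha hb
      rw [Finset.mem_range] at ha
      rw [Finset.mem_Ico] at hb
      omega
    · intro a b hab hmem
      have hq : ∀ i < j*M, (fun k => (a k).1) i = (fun k => (b k).1) i := by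
        intro i hi
        show (a i).1 = (b i).1
        rw [hab i (Finset.mem_range.2 hi)]
      obtain ⟨h1, h2⟩ := hmem
      constructor
      · show bdCocycle γ₁ γ₂ (fun k => (b k).1) (j*M) x
          ≠ bdCocycle γ₁ γ₂ (fun k => (b k).1) (j*M) y
        rw [← BD.cocycle_local hq x, ← BD.cocycle_local hq y]
        exact h1
      · show BD.Ydom M x0 tM (fun k => (b k).1) (j*M) ≤ 2*M
        rw [← BD.Ydom_local hq]
        exact h2
    · intro a b hab hmem
      simp only [hgset, Set.mem_iInter, Set.mem_preimage, Set.mem_setOf_eq] at hmem ⊢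
      intro i hi
      rw [← hab i hi]
      exact hmem i hi
  -- key one-step inequality
  have hkey : ∀ j, P (Nset (j+2)) + c * P (Nset j ∩ Bset j) ≤ P (Nset j) := by
    intro j
    set A := (Nset j ∩ Bset j) ∩ gset j with hAdef
    have hAsub : A ⊆ Nset j := fun ω hω => hω.1.1
    have hAmeas : MeasurableSet A := ((hNmeas j).inter (hBmeas j)).inter (hgmeas j)
    have hsub : Nset (j+2) ⊆ (Nset j \ A) ∪ {ω | ¬ ∀ i : ℕ, (ω i).1 < 1} := by
      intro ω hω
      by_cases hWω : ∀ i : ℕ, (ω i).1 < 1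
      case neg => exact Or.inr hWω
      left
      have hωN : bdCocycle γ₁ γ₂ (fun k => (ω k).1) ((j+2)*M) x
          ≠ bdCocycle γ₁ γ₂ (fun k => (ω k).1) ((j+2)*M) y := hω
      constructor
      · show bdCocycle γ₁ γ₂ (fun k => (ω k).1) (j*M) x
          ≠ bdCocycle γ₁ γ₂ (fun k => (ω k).1) (j*M) y
        intro heq
        apply hωN
        have := BD.cocycle_persist (fun k => (ω k).1) heq (2*M)
        rwa [show j*M + 2*M = (j+2)*M by ring] at this
      · intro hA'
        obtain ⟨⟨_, hB⟩, hg⟩ := hA'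
        apply hωN
        refine BD.coalesce hγ₁ hγ₂ hWω hpar hxx0 hyy0 hMx0 j hB ?_
        intro i hi1 hi2
        simp only [hgset, Set.mem_iInter, Set.mem_preimage, Set.mem_setOf_eq] at hg
        exact hg i (Finset.mem_Ico.2 ⟨hi1, hi2⟩)
    have hPA : P A = P (Nset j ∩ Bset j) * c := by rw [hAdef, hEg j]
    have hsplit : P A + P (Nset j \ A) = P (Nset j) := by
      have := measure_inter_add_diff (μ := P) (Nset j) hAmeas
      rwa [Set.inter_eq_self_of_subset_right hAsub] at this
    have hWnull : P {ω : ℕ → ℝ × ℝ | ¬ ∀ i : ℕ, (ω i).1 < 1} = 0 := ae_iff.1 hW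
    calc P (Nset (j+2)) + c * P (Nset j ∩ Bset j)
        ≤ P ((Nset j \ A) ∪ {ω | ¬ ∀ i : ℕ, (ω i).1 < 1}) + c * P (Nset j ∩ Bset j) :=
          add_le_add_left (measure_mono hsub) _
      _ ≤ (P (Nset j \ A) + P {ω : ℕ → ℝ × ℝ | ¬ ∀ i : ℕ, (ω i).1 < 1})
          + c * P (Nset j ∩ Bset j) := add_le_add_left (measure_union_le _ _) _
      _ = P (Nset j \ A) + P A := by rw [hWnull, hPA, add_zero, mul_comm]
      _ = P (Nset j) := by rw [add_comm]; exact hsplit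
  -- telescoping sum bound
  have htel : ∀ r K, c * ∑ k ∈ Finset.range K, P (Nset (2*k+r) ∩ Bset (2*k+r)) ≤ 1 := by
    intro r K
    have main : ∀ K, P (Nset (2*K+r))
        + c * ∑ k ∈ Finset.range K, P (Nset (2*k+r) ∩ Bset (2*k+r)) ≤ P (Nset r) := by
      intro K
      induction K with
      | zero => simpa using le_refl (P (Nset r))
      | succ K ih =>
        rw [Finset.sum_range_succ]
        calc P (Nset (2*(K+1)+r)) + c * (∑ k ∈ Finset.range K, P (Nset (2*k+r) ∩ Bset (2*k+r))
              + P (Nset (2*K+r) ∩ Bset (2*K+r)))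
            = (P (Nset ((2*K+r)+2)) + c * P (Nset (2*K+r) ∩ Bset (2*K+r)))
              + c * ∑ k ∈ Finset.range K, P (Nset (2*k+r) ∩ Bset (2*k+r)) := by
              rw [show 2*(K+1)+r = (2*K+r)+2 by ring]; ring
          _ ≤ P (Nset (2*K+r))
              + c * ∑ k ∈ Finset.range K, P (Nset (2*k+r) ∩ Bset (2*k+r)) :=
              add_le_add_left (hkey (2*K+r)) _
          _ ≤ P (Nset r) := ih
    calc c * ∑ k ∈ Finset.range K, P (Nset (2*k+r) ∩ Bset (2*k+r))
        ≤ P (Nset (2*K+r)) + c * ∑ k ∈ Finset.range K, P (Nset (2*k+r) ∩ Bset (2*k+r)) :=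
          le_add_self
      _ ≤ P (Nset r) := main K
      _ ≤ 1 := prob_le_one
  have hsum : ∀ r, (∑' k : ℕ, P (Nset (2*k+r) ∩ Bset (2*k+r))) ≠ ⊤ := by
    intro r
    have hle : (∑' k : ℕ, P (Nset (2*k+r) ∩ Bset (2*k+r))) ≤ 1 / c := by
      rw [ENNReal.tsum_eq_iSup_nat]
      apply iSup_le
      intro K
      rw [ENNReal.le_div_iff_mul_le (Or.inl hc0) (Or.inr ENNReal.one_ne_top), mul_comm]
      exact htel r K
    exact ne_top_of_le_ne_top (ENNReal.div_lt_top ENNReal.one_ne_top hc0).ne hle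
  have hbc : ∀ r : ℕ, ∀ᵐ ω ∂P, ∀ᶠ k in atTop, ω ∉ (Nset (2*k+r) ∩ Bset (2*k+r)) :=
    fun r => ae_eventually_notMem (hsum r)
  -- assemble
  filter_upwards [hW, BD.slln_atBot hIndep hUnif htM0.le htM1 htMhalf, hbc 0, hbc 1]
    with ω hWω hSω hbc0 hbc1
  by_cases hco : ∃ n, bdCocycle γ₁ γ₂ (fun k => (ω k).1) n x
      = bdCocycle γ₁ γ₂ (fun k => (ω k).1) n y
  · obtain ⟨n₀, hn₀⟩ := hco
    refine ⟨n₀, |bdTime γ₁ γ₂ ω x n₀ - bdTime γ₁ γ₂ ω y n₀|, abs_nonneg _, ?_⟩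
    intro n hn
    obtain ⟨k, rfl⟩ : ∃ k, n = n₀ + k := ⟨n - n₀, by omega⟩
    refine ⟨BD.cocycle_persist (fun k => (ω k).1) hn₀ k, ?_⟩
    have hdiff : ∀ k, bdTime γ₁ γ₂ ω x (n₀+k) - bdTime γ₁ γ₂ ω y (n₀+k)
        = bdTime γ₁ γ₂ ω x n₀ - bdTime γ₁ γ₂ ω y n₀ := by
      intro k
      induction k with
      | zero => rfl
      | succ k ih =>
        have hstate := BD.cocycle_persist (fun k => (ω k).1) hn₀ k
        show bdTime γ₁ γ₂ ω x ((n₀+k)+1) - bdTime γ₁ γ₂ ω y ((n₀+k)+1) = _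
        simp only [bdTime]
        rw [hstate]
        linarith [ih]
    rw [hdiff k]
  · exfalso
    have hN : ∀ j, ω ∈ Nset j := fun j heq => hco ⟨j*M, heq⟩
    have hBio : ∀ J, ∃ j ≥ J, ω ∈ Bset j := by
      intro J
      obtain ⟨n, hnge, hYn⟩ := BD.Ydom_small_io hMx0 hSω ((J+1)*M)
      set d := n / M with hd
      have h1 : M * d + n % M = n := Nat.div_add_mod n M
      have h2 : n % M < M := Nat.mod_lt _ (by omega)
      have h3 : (d+1)*M = M*d + M := by ring
      have hnle : n ≤ (d+1)*M := by omega
      refine ⟨d+1, ?_, ?_⟩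
      · have hdge : J + 1 ≤ d := by
          have := Nat.div_le_div_right (c := M) hnge
          rwa [Nat.mul_div_cancel _ (by omega : 0 < M)] at this
        omega
      · show BD.Ydom M x0 tM (fun k => (ω k).1) ((d+1)*M) ≤ 2*M
        have hk : (d+1)*M = n + ((d+1)*M - n) := by omega
        have hgrow := BD.Ydom_growth (q := fun k => (ω k).1) (tM := tM) hMx0 n ((d+1)*M - n)
        rw [← hk] at hgrow
        have hkM : (d+1)*M - n ≤ M := by omega
        omega
    obtain ⟨K0, hK0⟩ := eventually_atTop.1 hbc0
    obtain ⟨K1, hK1⟩ := eventually_atTop.1 hbc1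
    obtain ⟨j, hjge, hjB⟩ := hBio (2*(K0+K1)+2)
    have hjE : ω ∈ Nset j ∩ Bset j := ⟨hN j, hjB⟩
    rcases Nat.even_or_odd j with ⟨k, hk⟩ | ⟨k, hk⟩
    · refine hK0 k (by omega) ?_
      have : 2*k+0 = j := by omega
      rw [this]
      exact hjE
    · refine hK1 k (by omega) ?_
      have : 2*k+1 = j := by omega
      rw [this]
      exact hjE
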